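/- Let k ≥ 1 and let a_1,…,a_k and b_1,…,b_k be real numbers with a_1 ≥ a_2 ≥ … ≥ a_{k−1} ≥ |a_k| and b_1 ≥ b_2 ≥ … ≥ b_k ≥ 0. If there exists Y = (y_1,…,y_{2k}) ∈ ℝ^{2k} such that A(a,Y) is SO(2k+1)-conjugate to S = diag(L(b_1),…,L(b_k),0), then the interlacing chain b_1 ≥ a_1 ≥ b_2 ≥ a_2 ≥ … ≥ a_{k−1} ≥ b_k ≥ |a_k| holds. -/

import Mathlib

open Matrix Polynomial

/-- The `m × m` real matrix built from the `2 × 2` blocks `L (c 0), …, L (c (n-1))`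
(where `L a` has first row `(0, -a)` and second row `(a, 0)`) placed along the
diagonal, all remaining entries being `0`.  For `m = 2n` this is
`diag (L c₁, …, L cₙ)`; for `m = 2n+1` this is `diag (L c₁, …, L cₙ, 0)`. -/
def diagL (m n : ℕ) (c : Fin n → ℝ) : Matrix (Fin m) (Fin m) ℝ :=
  Matrix.of fun i j =>
    if h : i.val / 2 = j.val / 2 ∧ i.val / 2 < n then
      if i.val % 2 = 0 ∧ j.val % 2 = 1 then -c ⟨i.val / 2, h.2⟩
      else if i.val % 2 = 1 ∧ j.val % 2 = 0 then c ⟨i.val / 2, h.2⟩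
      else 0
    else 0

/-- `X` and `Y` are conjugate by a special orthogonal matrix:
there is `B` with `BᵀB = 1`, `det B = 1` and `B X B⁻¹ = Y`. -/
def SOConj {m : ℕ} (X Y : Matrix (Fin m) (Fin m) ℝ) : Prop :=
  ∃ B : Matrix (Fin m) (Fin m) ℝ, Bᵀ * B = 1 ∧ B.det = 1 ∧ B * X * B⁻¹ = Y

/-- The `(2k+1) × (2k+1)` real skew-symmetric matrix `A(a, Y)` with top-left
`2k × 2k` block `diag (L a₁, …, L aₖ)`, last column `(y₁, …, y_{2k}, 0)ᵀ` and
last row `(-y₁, …, -y_{2k}, 0)`. -/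
def Aodd (k : ℕ) (a : Fin k → ℝ) (Y : Fin (2*k) → ℝ) :
    Matrix (Fin (2*k+1)) (Fin (2*k+1)) ℝ :=
  Matrix.of fun i j =>
    if hi : i.val < 2*k then
      if hj : j.val < 2*k then diagL (2*k) k a ⟨i.val, hi⟩ ⟨j.val, hj⟩
      else Y ⟨i.val, hi⟩
    else if hj : j.val < 2*k then -Y ⟨j.val, hj⟩ else 0

namespace Stmt1Aux

lemma diagL_col_even {m n : ℕ} (c : Fin n → ℝ) (p : Fin m) (v : ℕ) (hv : v < n)
    (h2 : 2*v < m) :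
    diagL m n c p ⟨2*v, h2⟩ = if p.val = 2*v+1 then c ⟨v, hv⟩ else 0 := by
  unfold diagL
  rw [Matrix.of_apply]
  simp only [Fin.val_mk]
  by_cases hp : p.val = 2*v+1
  · rw [if_pos hp, dif_pos (by constructor <;> omega), if_neg (by omega), if_pos (by omega)]
    congr 1
    exact Fin.ext (by simp only [Fin.val_mk]; omega)
  · rw [if_neg hp]
    split_ifs with h1 h2' h3 <;> first | rfl | omega | (exfalso; omega)

lemma diagL_col_odd {m n : ℕ} (c : Fin n → ℝ) (p : Fin m) (v : ℕ) (hv : v < n)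
    (h2 : 2*v+1 < m) :
    diagL m n c p ⟨2*v+1, h2⟩ = if p.val = 2*v then -c ⟨v, hv⟩ else 0 := by
  unfold diagL
  rw [Matrix.of_apply]
  simp only [Fin.val_mk]
  by_cases hp : p.val = 2*v
  · rw [if_pos hp, dif_pos (by constructor <;> omega), if_pos (by omega)]
    congr 2
    exact Fin.ext (by simp only [Fin.val_mk]; omega)
  · rw [if_neg hp]
    split_ifs with h1 h2' h3 <;> first | rfl | omega | (exfalso; omega)

lemma diagL_col_big {m n : ℕ} (c : Fin n → ℝ) (p q : Fin m) (hq : n ≤ q.val / 2) :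
    diagL m n c p q = 0 := by
  unfold diagL
  rw [Matrix.of_apply]
  split_ifs with h1 h2 h3 <;> first | rfl | omega

lemma Aodd_col_even {k : ℕ} (a : Fin k → ℝ) (Y : Fin (2*k) → ℝ)
    (p : Fin (2*k+1)) (hp : p.val < 2*k) (v : ℕ) (hv : v < k) (h2 : 2*v < 2*k+1) :
    Aodd k a Y p ⟨2*v, h2⟩ = if p.val = 2*v+1 then a ⟨v, hv⟩ else 0 := by
  unfold Aodd
  rw [Matrix.of_apply, dif_pos hp, dif_pos (by simp only [Fin.val_mk]; omega)]
  exact diagL_col_even a ⟨p.val, hp⟩ v hv (by omega)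

lemma Aodd_col_odd {k : ℕ} (a : Fin k → ℝ) (Y : Fin (2*k) → ℝ)
    (p : Fin (2*k+1)) (hp : p.val < 2*k) (v : ℕ) (hv : v < k) (h2 : 2*v+1 < 2*k+1) :
    Aodd k a Y p ⟨2*v+1, h2⟩ = if p.val = 2*v then -a ⟨v, hv⟩ else 0 := by
  unfold Aodd
  rw [Matrix.of_apply, dif_pos hp, dif_pos (by simp only [Fin.val_mk]; omega)]
  exact diagL_col_odd a ⟨p.val, hp⟩ v hv (by omega)

end Stmt1Aux
namespace Stmt1Aux2
variable {k : ℕ}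

noncomputable def evec (k : ℕ) (j : Fin k) (ε : ℝ) : Fin (2*k+1) → ℂ :=
  Pi.single ⟨2*j.val, by have := j.isLt; omega⟩ 1
    + Pi.single ⟨2*j.val+1, by have := j.isLt; omega⟩ (-((ε:ℂ)*Complex.I))

noncomputable def elast (k : ℕ) : Fin (2*k+1) → ℂ := Pi.single ⟨2*k, by omega⟩ 1

lemma star_single {n : ℕ} (p : Fin n) (c : ℂ) :
    star (Pi.single p c : Fin n → ℂ) = Pi.single p (starRingEnd ℂ c) := by
  funext q
  by_cases h : q = p <;> simp [Pi.single_apply, h, Pi.star_apply]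

lemma star_evec (j : Fin k) (ε : ℝ) :
    star (evec k j ε) = Pi.single ⟨2*j.val, by have := j.isLt; omega⟩ 1
      + Pi.single ⟨2*j.val+1, by have := j.isLt; omega⟩ ((ε:ℂ)*Complex.I) := by
  unfold evec
  rw [star_add, star_single, star_single]
  simp [Complex.conj_ofReal]

lemma star_elast : star (elast k) = elast k := by
  unfold elast
  rw [star_single]
  simp

lemma evec_dot (j j' : Fin k) (ε ε' : ℝ) :
    star (evec k j ε) ⬝ᵥ evec k j' ε' = if j = j' then ((1+ε*ε' : ℝ):ℂ) else 0 := by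
  rw [star_evec]
  unfold evec
  rw [add_dotProduct]
  simp only [single_dotProduct, Pi.add_apply, Pi.single_apply, Fin.mk.injEq]
  by_cases h : j = j'
  · subst h
    rw [if_pos rfl, if_neg (by omega), if_neg (by omega), if_pos rfl, if_pos rfl]
    push_cast
    ring_nf
    rw [Complex.I_sq]
    ring
  · have hne : j.val ≠ j'.val := fun hh => h (Fin.ext hh)
    rw [if_neg (by omega), if_neg (by omega), if_neg (by omega), if_neg (by omega),
      if_neg h]
    ring

lemma evec_dot_elast (j : Fin k) (ε : ℝ) : star (evec k j ε) ⬝ᵥ elast k = 0 := by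
  rw [star_evec]
  unfold elast
  rw [add_dotProduct]
  simp only [single_dotProduct, Pi.single_apply, Fin.mk.injEq]
  have := j.isLt
  rw [if_neg (by omega), if_neg (by omega)]
  ring

lemma elast_dot_evec (j : Fin k) (ε : ℝ) : star (elast k) ⬝ᵥ evec k j ε = 0 := by
  rw [star_elast]
  unfold elast evec
  rw [single_dotProduct]
  simp only [Pi.add_apply, Pi.single_apply, Fin.mk.injEq]
  have := j.isLt
  rw [if_neg (by omega), if_neg (by omega)]
  ring

lemma elast_dot_elast : star (elast k) ⬝ᵥ elast k = ((1:ℝ):ℂ) := by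
  rw [star_elast]
  unfold elast
  rw [single_dotProduct]
  simp

lemma iso_dot {n : ℕ} (P : Matrix (Fin n) (Fin n) ℂ) (hP : Pᴴ * P = 1)
    (u u' : Fin n → ℂ) : star (P *ᵥ u) ⬝ᵥ (P *ᵥ u') = star u ⬝ᵥ u' := by
  rw [star_mulVec, dotProduct_mulVec, vecMul_vecMul, hP, vecMul_one]

lemma iso_form {n : ℕ} (P S : Matrix (Fin n) (Fin n) ℂ) (hP : Pᴴ * P = 1)
    (u u' : Fin n → ℂ) :
    star (P *ᵥ u) ⬝ᵥ ((P * S * Pᴴ) *ᵥ (P *ᵥ u')) = star u ⬝ᵥ (S *ᵥ u') := by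
  rw [mulVec_mulVec, star_mulVec, dotProduct_mulVec, vecMul_vecMul]
  have h2 : Pᴴ * (P * S * Pᴴ * P) = S := by
    rw [Matrix.mul_assoc (P*S), hP, Matrix.mul_one, ← Matrix.mul_assoc, hP, Matrix.one_mul]
  rw [h2, ← dotProduct_mulVec]

lemma mapc_mul {n : ℕ} (M N : Matrix (Fin n) (Fin n) ℝ) :
    (M*N).map Complex.ofReal = M.map Complex.ofReal * N.map Complex.ofReal := by
  ext i j
  simp [Matrix.mul_apply, Matrix.map_apply]

lemma mapc_one {n : ℕ} : (1 : Matrix (Fin n) (Fin n) ℝ).map Complex.ofReal = 1 := by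
  ext i j
  simp [Matrix.map_apply, Matrix.one_apply, apply_ite]

lemma mapc_conjTranspose {n : ℕ} (M : Matrix (Fin n) (Fin n) ℝ) :
    (M.map Complex.ofReal)ᴴ = Mᵀ.map Complex.ofReal := by
  ext i j
  simp [Matrix.conjTranspose_apply, Matrix.map_apply, Matrix.transpose_apply,
    Complex.conj_ofReal]


lemma dotProduct_sum' {n : ℕ} {ι : Type} [Fintype ι] (x : Fin n → ℂ) (f : ι → Fin n → ℂ) :
    x ⬝ᵥ (∑ i, f i) = ∑ i, x ⬝ᵥ f i := by
  simp only [dotProduct, Finset.sum_apply, Finset.mul_sum]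
  rw [Finset.sum_comm]

lemma sum_dotProduct' {n : ℕ} {ι : Type} [Fintype ι] (x : Fin n → ℂ) (f : ι → Fin n → ℂ) :
    (∑ i, f i) ⬝ᵥ x = ∑ i, f i ⬝ᵥ x := by
  simp only [dotProduct, Finset.sum_apply, Finset.sum_mul]
  rw [Finset.sum_comm]

lemma mulVec_sum' {n : ℕ} {ι : Type} [Fintype ι] (M : Matrix (Fin n) (Fin n) ℂ)
    (f : ι → Fin n → ℂ) : M *ᵥ (∑ i, f i) = ∑ i, M *ᵥ f i := by
  funext r
  simp only [mulVec, dotProduct, Finset.sum_apply, Finset.mul_sum]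
  rw [Finset.sum_comm]

lemma star_sum_dot {n : ℕ} {ι : Type} [Fintype ι] (v : ι → Fin n → ℂ) (t : ι → ℂ)
    (y : Fin n → ℂ) :
    star (∑ i, t i • v i) ⬝ᵥ y = ∑ i, (starRingEnd ℂ) (t i) * (star (v i) ⬝ᵥ y) := by
  have h1 : star (∑ i, t i • v i) = ∑ i, (starRingEnd ℂ (t i)) • star (v i) := by
    rw [star_sum]
    apply Finset.sum_congr rfl
    intro i _
    rw [star_smul]
    rfl
  rw [h1, sum_dotProduct']
  apply Finset.sum_congr rfl
  intro i _
  rw [smul_dotProduct, smul_eq_mul]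

lemma dot_sum_single {n : ℕ} {ι : Type} [Fintype ι] [DecidableEq ι]
    (v : ι → Fin n → ℂ) (t : ι → ℂ) (N : ι → ℝ)
    (hN : ∀ i, star (v i) ⬝ᵥ v i = (N i : ℂ))
    (ho : ∀ i i', i ≠ i' → star (v i) ⬝ᵥ v i' = 0) (i : ι) :
    star (v i) ⬝ᵥ (∑ i', t i' • v i') = t i * (N i : ℂ) := by
  rw [dotProduct_sum', Finset.sum_eq_single i]
  · rw [dotProduct_smul, hN i, smul_eq_mul]
  · intro i' _ hne
    rw [dotProduct_smul, ho i i' (Ne.symm hne), smul_zero]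
  · intro h
    exact absurd (Finset.mem_univ i) h

lemma norm_eval {n : ℕ} {ι : Type} [Fintype ι] [DecidableEq ι]
    (v : ι → Fin n → ℂ) (t : ι → ℂ) (N : ι → ℝ)
    (hN : ∀ i, star (v i) ⬝ᵥ v i = (N i : ℂ))
    (ho : ∀ i i', i ≠ i' → star (v i) ⬝ᵥ v i' = 0) :
    star (∑ i, t i • v i) ⬝ᵥ (∑ i, t i • v i)
      = ((∑ i, Complex.normSq (t i) * N i : ℝ) : ℂ) := by
  rw [star_sum_dot, Complex.ofReal_sum]
  apply Finset.sum_congr rfl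
  intro i _
  rw [dot_sum_single v t N hN ho i, ← mul_assoc, mul_comm ((starRingEnd ℂ) (t i)) (t i),
    Complex.mul_conj]
  push_cast
  ring

lemma form_eval {n : ℕ} {ι : Type} [Fintype ι] [DecidableEq ι]
    (M : Matrix (Fin n) (Fin n) ℂ) (v : ι → Fin n → ℂ) (t : ι → ℂ)
    (ρ : ι → ℝ) (N : ι → ℝ)
    (hN : ∀ i, star (v i) ⬝ᵥ v i = (N i : ℂ))
    (ho : ∀ i i', i ≠ i' → star (v i) ⬝ᵥ v i' = 0)
    (hf : ∀ i i', star (v i) ⬝ᵥ (M *ᵥ v i')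
        = Complex.I * (ρ i' : ℂ) * (star (v i) ⬝ᵥ v i')) :
    star (∑ i, t i • v i) ⬝ᵥ (M *ᵥ (∑ i, t i • v i))
      = Complex.I * ((∑ i, ρ i * (Complex.normSq (t i) * N i) : ℝ) : ℂ) := by
  have hMx : M *ᵥ (∑ i', t i' • v i') = ∑ i', t i' • (M *ᵥ v i') := by
    rw [mulVec_sum']
    apply Finset.sum_congr rfl
    intro i _
    rw [mulVec_smul]
  rw [hMx, star_sum_dot, Complex.ofReal_sum, Finset.mul_sum]
  apply Finset.sum_congr rfl
  intro i _
  rw [dotProduct_sum', Finset.sum_eq_single i]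
  · rw [dotProduct_smul, hf i i, hN i, smul_eq_mul]
    have : (starRingEnd ℂ) (t i) * t i = (Complex.normSq (t i) : ℂ) := by
      rw [mul_comm, Complex.mul_conj]
    push_cast
    linear_combination (Complex.I * (ρ i : ℂ) * (N i : ℂ)) * this
  · intro i' _ hne
    rw [dotProduct_smul, hf i i', ho i i' (Ne.symm hne), mul_zero, smul_zero]
  · intro h
    exact absurd (Finset.mem_univ i) h

lemma key {n : ℕ} {ι κ : Type} [Fintype ι] [Fintype κ] [DecidableEq ι] [DecidableEq κ]
    (hcard : n < Fintype.card ι + Fintype.card κ)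
    (M : Matrix (Fin n) (Fin n) ℂ)
    (v : ι → Fin n → ℂ) (w : κ → Fin n → ℂ)
    (μ : ι → ℝ) (ν : κ → ℝ) (c : ℝ)
    (hμ : ∀ i, c < μ i) (hν : ∀ j, ν j ≤ c)
    (Nv : ι → ℝ) (Nw : κ → ℝ)
    (hNv : ∀ i, star (v i) ⬝ᵥ v i = (Nv i : ℂ)) (hNvpos : ∀ i, 0 < Nv i)
    (hNw : ∀ j, star (w j) ⬝ᵥ w j = (Nw j : ℂ)) (hNwpos : ∀ j, 0 < Nw j)
    (hvo : ∀ i i', i ≠ i' → star (v i) ⬝ᵥ v i' = 0)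
    (hwo : ∀ j j', j ≠ j' → star (w j) ⬝ᵥ w j' = 0)
    (hvf : ∀ i i', star (v i) ⬝ᵥ (M *ᵥ v i')
        = Complex.I * (μ i' : ℂ) * (star (v i) ⬝ᵥ v i'))
    (hwf : ∀ j j', star (w j) ⬝ᵥ (M *ᵥ w j')
        = Complex.I * (ν j' : ℂ) * (star (w j) ⬝ᵥ w j')) :
    False := by
  classical
  have hnli : ¬ LinearIndependent ℂ (Sum.elim v w) := by
    intro h
    have h1 := h.fintype_card_le_finrank
    rw [Module.finrank_fin_fun, Fintype.card_sum] at h1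
    omega
  obtain ⟨g, hg0, i0, hgi0⟩ := Fintype.not_linearIndependent_iff.mp hnli
  set t : ι → ℂ := fun i => g (Sum.inl i) with ht
  set s : κ → ℂ := fun j => -g (Sum.inr j) with hs
  set x : Fin n → ℂ := ∑ i, t i • v i with hxdef
  have hsplit : ∑ i, t i • v i + ∑ j, g (Sum.inr j) • w j = 0 := by
    calc ∑ i, t i • v i + ∑ j, g (Sum.inr j) • w j
        = ∑ s', g s' • Sum.elim v w s' := (Fintype.sum_sum_type (fun s' : ι ⊕ κ => g s' • Sum.elim v w s')).symm
      _ = 0 := hg0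
  have hx2 : x = ∑ j, s j • w j := by
    have h2 : x = - ∑ j, g (Sum.inr j) • w j := eq_neg_of_add_eq_zero_left hsplit
    rw [h2, ← Finset.sum_neg_distrib]
    apply Finset.sum_congr rfl
    intro j _
    rw [hs]
    simp [neg_smul]
  have hPx : star x ⬝ᵥ x = ((∑ i, Complex.normSq (t i) * Nv i : ℝ) : ℂ) :=
    norm_eval v t Nv hNv hvo
  have hQx : star x ⬝ᵥ x = ((∑ j, Complex.normSq (s j) * Nw j : ℝ) : ℂ) := by
    rw [hx2]; exact norm_eval w s Nw hNw hwo
  have hR1x : star x ⬝ᵥ (M *ᵥ x)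
      = Complex.I * ((∑ i, μ i * (Complex.normSq (t i) * Nv i) : ℝ) : ℂ) :=
    form_eval M v t μ Nv hNv hvo hvf
  have hR2x : star x ⬝ᵥ (M *ᵥ x)
      = Complex.I * ((∑ j, ν j * (Complex.normSq (s j) * Nw j) : ℝ) : ℂ) := by
    rw [hx2]; exact form_eval M w s ν Nw hNw hwo hwf
  set P : ℝ := ∑ i, Complex.normSq (t i) * Nv i with hP
  set Q : ℝ := ∑ j, Complex.normSq (s j) * Nw j with hQ
  set R1 : ℝ := ∑ i, μ i * (Complex.normSq (t i) * Nv i) with hR1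
  set R2 : ℝ := ∑ j, ν j * (Complex.normSq (s j) * Nw j) with hR2
  have hPQ : P = Q := by
    have h3 : (P : ℂ) = (Q : ℂ) := hPx.symm.trans hQx
    exact_mod_cast h3
  have hRR : R1 = R2 := by
    have h12 : Complex.I * (R1 : ℂ) = Complex.I * (R2 : ℂ) := hR1x.symm.trans hR2x
    have h13 := mul_left_cancel₀ Complex.I_ne_zero h12
    exact_mod_cast h13
  have hex : ∃ i, t i ≠ 0 := by
    by_contra hall
    push_neg at hall
    have hx0 : x = 0 := by
      rw [hxdef]
      apply Finset.sum_eq_zero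
      intro i _
      rw [hall i, zero_smul]
    cases i0 with
    | inl i => exact hgi0 (hall i)
    | inr j =>
      have hsj : s j ≠ 0 := by
        rw [hs]
        simpa using hgi0
      have hdj : star (w j) ⬝ᵥ x = s j * (Nw j : ℂ) := by
        rw [hx2]
        exact dot_sum_single w s Nw hNw hwo j
      rw [hx0, dotProduct_zero] at hdj
      rcases mul_eq_zero.mp hdj.symm with h | h
      · exact hsj h
      · have : Nw j ≠ 0 := ne_of_gt (hNwpos j)
        exact this (by exact_mod_cast h)
  obtain ⟨i1, hi1⟩ := hex
  have h1 : c * P < R1 := by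
    rw [hP, hR1, Finset.mul_sum]
    apply Finset.sum_lt_sum
    · intro i _
      exact mul_le_mul_of_nonneg_right (le_of_lt (hμ i))
        (mul_nonneg (Complex.normSq_nonneg _) (le_of_lt (hNvpos i)))
    · exact ⟨i1, Finset.mem_univ i1,
        mul_lt_mul_of_pos_right (hμ i1)
          (mul_pos (Complex.normSq_pos.mpr hi1) (hNvpos i1))⟩
  have h2 : R2 ≤ c * Q := by
    rw [hQ, hR2, Finset.mul_sum]
    apply Finset.sum_le_sum
    intro j _
    exact mul_le_mul_of_nonneg_right (hν j)
      (mul_nonneg (Complex.normSq_nonneg _) (le_of_lt (hNwpos j)))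
  rw [hRR, hPQ] at h1
  linarith

end Stmt1Aux2

namespace Stmt1Aux2
open Stmt1Aux

lemma mulVec_single_fun {n : ℕ} (M : Matrix (Fin n) (Fin n) ℂ) (j : Fin n) (x : ℂ) :
    M *ᵥ Pi.single j x = fun i => M i j * x :=
  funext fun _ => dotProduct_single _ _ _

lemma evec_form {k : ℕ} (a : Fin k → ℝ) (Y : Fin (2*k) → ℝ) (j j' : Fin k) (ε ε' : ℝ)
    (h : ε'*ε' = 1) :
    star (evec k j ε) ⬝ᵥ ((Aodd k a Y).map Complex.ofReal *ᵥ evec k j' ε')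
      = Complex.I * ((ε' * a j' : ℝ):ℂ) * (star (evec k j ε) ⬝ᵥ evec k j' ε') := by
  have hj := j.isLt
  have hj' := j'.isLt
  rw [evec_dot, star_evec]
  conv_lhs => rw [evec]
  rw [mulVec_add, mulVec_single_fun, mulVec_single_fun, dotProduct_add, add_dotProduct,
    add_dotProduct, single_dotProduct, single_dotProduct,
    single_dotProduct, single_dotProduct]
  simp only [Matrix.map_apply]
  rw [Aodd_col_even a Y _ (by simp only [Fin.val_mk]; omega) j'.val hj' (by omega),
    Aodd_col_even a Y _ (by simp only [Fin.val_mk]; omega) j'.val hj' (by omega),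
    Aodd_col_odd a Y _ (by simp only [Fin.val_mk]; omega) j'.val hj' (by omega),
    Aodd_col_odd a Y _ (by simp only [Fin.val_mk]; omega) j'.val hj' (by omega)]
  simp only [Fin.val_mk]
  by_cases hjj : j = j'
  · have hv : j.val = j'.val := congrArg Fin.val hjj
    rw [if_neg (by omega), if_pos (by omega), if_pos (by omega), if_neg (by omega),
      if_pos hjj]
    have hc : ((ε':ℂ))*((ε':ℂ)) = 1 := by exact_mod_cast h
    push_cast
    linear_combination (-(Complex.I * (a j' : ℂ) * (ε:ℂ))) * hc
  · have hne : j.val ≠ j'.val := fun hh => hjj (Fin.ext hh)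
    rw [if_neg (by omega), if_neg (by omega), if_neg (by omega), if_neg (by omega),
      if_neg hjj]
    push_cast
    ring

lemma diagL_mulVec_evec {k : ℕ} (b : Fin k → ℝ) (j : Fin k) (ε : ℝ) (h : ε*ε = 1) :
    (diagL (2*k+1) k b).map Complex.ofReal *ᵥ evec k j ε
      = (Complex.I * ((ε * b j : ℝ):ℂ)) • evec k j ε := by
  have hj := j.isLt
  unfold evec
  rw [mulVec_add, mulVec_single_fun, mulVec_single_fun]
  funext p
  simp only [Pi.add_apply, Pi.smul_apply, Pi.single_apply, Matrix.map_apply, smul_eq_mul,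
    Fin.ext_iff, Fin.val_mk]
  rw [diagL_col_even b p j.val hj (by omega), diagL_col_odd b p j.val hj (by omega)]
  have hc : ((ε:ℂ))*((ε:ℂ)) = 1 := by exact_mod_cast h
  by_cases h1 : p.val = 2*j.val
  · rw [if_neg (by omega), if_pos h1, if_pos h1, if_neg (by omega)]
    push_cast
    ring
  · by_cases h2 : p.val = 2*j.val+1
    · rw [if_pos h2, if_neg (by omega), if_neg (by omega), if_pos h2]
      push_cast
      linear_combination ((b j:ℂ) * (ε:ℂ)^2) * Complex.I_sq - (b j:ℂ) * hc
    · rw [if_neg (by omega), if_neg (by omega), if_neg (by omega), if_neg (by omega)]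
      push_cast
      ring

lemma diagL_mulVec_elast {k : ℕ} (b : Fin k → ℝ) :
    (diagL (2*k+1) k b).map Complex.ofReal *ᵥ elast k = 0 := by
  unfold elast
  rw [mulVec_single_fun]
  funext p
  simp only [Matrix.map_apply, Pi.zero_apply]
  rw [diagL_col_big b p _ (by simp only [Fin.val_mk]; omega)]
  simp

end Stmt1Aux2

open Stmt1Aux Stmt1Aux2

/-- Lemma (openodd), necessity part: if `a₁ ≥ … ≥ a_{k-1} ≥ |a_k|`,
`b₁ ≥ … ≥ b_k ≥ 0`, and some `Y` makes `A(a, Y)` SO(2k+1)-conjugate to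
`S = diag (L b₁, …, L b_k, 0)`, then the interlacing chain
`b₁ ≥ a₁ ≥ b₂ ≥ a₂ ≥ … ≥ a_{k-1} ≥ b_k ≥ |a_k|` holds. -/
theorem statement1 (k : ℕ) (hk : 1 ≤ k) (a b : Fin k → ℝ)
    (ha1 : ∀ i : ℕ, ∀ h : i + 2 < k, a ⟨i, by omega⟩ ≥ a ⟨i + 1, by omega⟩)
    (ha2 : 2 ≤ k → a ⟨k - 2, by omega⟩ ≥ |a ⟨k - 1, by omega⟩|)
    (hb1 : ∀ i : ℕ, ∀ h : i + 1 < k, b ⟨i, by omega⟩ ≥ b ⟨i + 1, h⟩)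
    (hb2 : b ⟨k - 1, by omega⟩ ≥ 0)
    (hY : ∃ Y : Fin (2*k) → ℝ, SOConj (Aodd k a Y) (diagL (2*k+1) k b)) :
    (∀ i : ℕ, ∀ h : i + 1 < k, b ⟨i, by omega⟩ ≥ a ⟨i, by omega⟩) ∧
    (∀ i : ℕ, ∀ h : i + 1 < k, a ⟨i, by omega⟩ ≥ b ⟨i + 1, h⟩) ∧
    b ⟨k - 1, by omega⟩ ≥ |a ⟨k - 1, by omega⟩| := by
  classical
  obtain ⟨Y, B, hB, hdet, hconj⟩ := hY
  -- monotonicity helpers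
  have hbmono : ∀ q p : ℕ, ∀ _hpq : p ≤ q, ∀ hq : q < k, b ⟨q, hq⟩ ≤ b ⟨p, by omega⟩ := by
    intro q
    induction q with
    | zero =>
      intro p hp hq
      have hp0 : p = 0 := by omega
      subst hp0
      exact le_refl _
    | succ m ih =>
      intro p hp hq
      rcases Nat.eq_or_lt_of_le hp with he | hlt
      · subst he
        exact le_refl _
      · exact le_trans (hb1 m hq) (ih p (by omega) (by omega))
  have hbnn : ∀ j : Fin k, 0 ≤ b j := by
    intro j
    have h1 := hbmono (k-1) j.val (by omega) (by omega)
    exact le_trans hb2 h1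
  have hamono : ∀ q p : ℕ, ∀ _hpq : p ≤ q, ∀ hq : q + 1 < k, a ⟨q, by omega⟩ ≤ a ⟨p, by omega⟩ := by
    intro q
    induction q with
    | zero =>
      intro p hp hq
      have hp0 : p = 0 := by omega
      subst hp0
      exact le_refl _
    | succ m ih =>
      intro p hp hq
      rcases Nat.eq_or_lt_of_le hp with he | hlt
      · subst he
        exact le_refl _
      · exact le_trans (ha1 m (by omega)) (ih p (by omega) (by omega))
  have hann : ∀ i : ℕ, ∀ h : i + 1 < k, 0 ≤ a ⟨i, by omega⟩ := by
    intro i h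
    have h1 : a ⟨k-2, by omega⟩ ≤ a ⟨i, by omega⟩ := hamono (k-2) i (by omega) (by omega)
    have h2 := ha2 (by omega)
    have h3 := abs_nonneg (a ⟨k-1, by omega⟩)
    linarith
  have habs : ∀ q p : ℕ, ∀ _hpq : p ≤ q, ∀ hq : q < k, |a ⟨q, hq⟩| ≤ |a ⟨p, by omega⟩| := by
    intro q p hpq hq
    by_cases hq2 : q + 1 < k
    · rw [abs_of_nonneg (hann q hq2), abs_of_nonneg (hann p (by omega))]
      exact hamono q p hpq hq2
    · have hqe : q = k - 1 := by omega
      subst hqe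
      by_cases hp2 : p + 1 < k
      · have h1 : |a ⟨k-1, hq⟩| ≤ a ⟨k-2, by omega⟩ := ha2 (by omega)
        have h2 : a ⟨k-2, by omega⟩ ≤ a ⟨p, by omega⟩ := hamono (k-2) p (by omega) (by omega)
        rw [abs_of_nonneg (hann p hp2)]
        linarith
      · have : p = k - 1 := by omega
        subst this
        exact le_refl _
  -- sign helper
  set sg : Fin k → ℝ := fun j => if 0 ≤ a j then 1 else -1 with hsgdef
  have hsg1 : ∀ j, sg j * sg j = 1 := by
    intro j
    rw [hsgdef]
    by_cases h : 0 ≤ a j <;> simp [h]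
  have hsgabs : ∀ j, sg j * a j = |a j| := by
    intro j
    rw [hsgdef]
    by_cases h : 0 ≤ a j
    · simp [h, abs_of_nonneg h]
    · simp only [h, if_false]
      rw [abs_of_neg (lt_of_not_ge h)]
      ring
  -- matrices
  have hBB' : B * Bᵀ = 1 := mul_eq_one_comm.mp hB
  have hBinv : B⁻¹ = Bᵀ := Matrix.inv_eq_left_inv hB
  rw [hBinv] at hconj
  have hA : Aodd k a Y = Bᵀ * diagL (2*k+1) k b * B := by
    have h1 : Bᵀ * (B * Aodd k a Y * Bᵀ) * B = Aodd k a Y := by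
      calc Bᵀ * (B * Aodd k a Y * Bᵀ) * B
          = (Bᵀ * B) * Aodd k a Y * (Bᵀ * B) := by simp only [Matrix.mul_assoc]
        _ = Aodd k a Y := by rw [hB, Matrix.one_mul, Matrix.mul_one]
    rw [← hconj, h1]
  set P : Matrix (Fin (2*k+1)) (Fin (2*k+1)) ℂ := Bᵀ.map Complex.ofReal with hPdef
  set Sc : Matrix (Fin (2*k+1)) (Fin (2*k+1)) ℂ := (diagL (2*k+1) k b).map Complex.ofReal
    with hScdef
  set Ac : Matrix (Fin (2*k+1)) (Fin (2*k+1)) ℂ := (Aodd k a Y).map Complex.ofReal with hAcdef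
  have hPH : Pᴴ = B.map Complex.ofReal := by
    rw [hPdef, mapc_conjTranspose, Matrix.transpose_transpose]
  have hPHP : Pᴴ * P = 1 := by
    rw [hPH, hPdef, ← mapc_mul, hBB', mapc_one]
  have hAc2 : Ac = P * Sc * Pᴴ := by
    rw [hAcdef, hA, hPH, hPdef, hScdef, ← mapc_mul, ← mapc_mul]
  have hWdot : ∀ (u u' : Fin (2*k+1) → ℂ),
      star (P *ᵥ u) ⬝ᵥ (P *ᵥ u') = star u ⬝ᵥ u' := iso_dot P hPHP
  have hWform : ∀ (u u' : Fin (2*k+1) → ℂ),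
      star (P *ᵥ u) ⬝ᵥ (Ac *ᵥ (P *ᵥ u')) = star u ⬝ᵥ (Sc *ᵥ u') := by
    intro u u'
    rw [hAc2]
    exact iso_form P Sc hPHP u u'
  -- Claim 1 : |a m| ≤ b m for all m
  have claim1 : ∀ m : Fin k, |a m| ≤ b m := by
    intro m
    by_contra hcon
    push_neg at hcon
    have hmlt := m.isLt
    refine key (n := 2*k+1) (ι := Fin (m.val+1)) (κ := Fin (k - m.val) ⊕ (Fin k ⊕ Fin 1))
      (by simp only [Fintype.card_sum, Fintype.card_fin]; omega) Ac
      (fun i => evec k ⟨i.val, by have := i.isLt; omega⟩ (sg ⟨i.val, by have := i.isLt; omega⟩))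
      (fun j => match j with
        | Sum.inl j => P *ᵥ evec k ⟨m.val + j.val, by have := j.isLt; omega⟩ 1
        | Sum.inr (Sum.inl j) => P *ᵥ evec k j (-1)
        | Sum.inr (Sum.inr _) => P *ᵥ elast k)
      (fun i => |a ⟨i.val, by have := i.isLt; omega⟩|)
      (fun j => match j with
        | Sum.inl j => b ⟨m.val + j.val, by have := j.isLt; omega⟩
        | Sum.inr (Sum.inl j) => -b j
        | Sum.inr (Sum.inr _) => 0)
      (b m) ?_ ?_ (fun _ => 2)
      (fun j => match j with
        | Sum.inl _ => 2
        | Sum.inr (Sum.inl _) => 2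
        | Sum.inr (Sum.inr _) => 1) ?_ ?_ ?_ ?_ ?_ ?_ ?_ ?_
    · -- hμ
      intro i
      exact lt_of_lt_of_le hcon (habs m.val i.val (by have := i.isLt; omega) m.isLt)
    · -- hν
      rintro (j | j | j)
      · exact hbmono (m.val + j.val) m.val (by omega) (by have := j.isLt; omega)
      · exact le_trans (neg_nonpos.mpr (hbnn j)) (hbnn m)
      · exact hbnn m
    · -- hNv
      intro i
      rw [evec_dot, if_pos rfl, hsg1]
      norm_num
    · intro i
      norm_num
    · -- hNw
      rintro (j | j | j)
      · rw [hWdot, evec_dot, if_pos rfl]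
        norm_num
      · rw [hWdot, evec_dot, if_pos rfl]
        norm_num
      · rw [hWdot, elast_dot_elast]
    · rintro (j | j | j) <;> norm_num
    · -- hvo
      intro i i' hne
      rw [evec_dot, if_neg]
      intro h
      apply hne
      have hval : i.val = i'.val := by
        have := congrArg Fin.val h
        simpa using this
      exact Fin.ext hval
    · -- hwo
      rintro (j | j | j) (j' | j' | j') hne
      · rw [hWdot, evec_dot, if_neg]
        intro h
        apply hne
        have hval := congrArg Fin.val h
        simp only [Fin.val_mk] at hval
        have : j = j' := Fin.ext (by omega)
        rw [this]
      · rw [hWdot, evec_dot]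
        split_ifs with h
        · norm_num
        · rfl
      · rw [hWdot, evec_dot_elast]
      · rw [hWdot, evec_dot]
        split_ifs with h
        · norm_num
        · rfl
      · rw [hWdot, evec_dot, if_neg]
        intro h
        exact hne (by rw [show j = j' from h])
      · rw [hWdot, evec_dot_elast]
      · rw [hWdot, elast_dot_evec]
      · rw [hWdot, elast_dot_evec]
      · exact absurd (congrArg (fun z => Sum.inr (Sum.inr z) :
          Fin 1 → Fin (k - m.val) ⊕ (Fin k ⊕ Fin 1)) (Subsingleton.elim j j')) hne
    · -- hvf
      intro i i'
      rw [hAcdef, evec_form a Y _ _ _ _ (hsg1 _), hsgabs]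
    · -- hwf
      rintro (j | j | j) (j' | j' | j') <;>
        first
        | (rw [hWform, hWdot, hScdef, diagL_mulVec_evec b _ 1 (by norm_num),
            dotProduct_smul, smul_eq_mul]; push_cast; ring)
        | (rw [hWform, hWdot, hScdef, diagL_mulVec_evec b _ (-1) (by norm_num),
            dotProduct_smul, smul_eq_mul]; push_cast; ring)
        | (rw [hWform, hWdot, hScdef, diagL_mulVec_elast, dotProduct_zero]; push_cast; ring)
  -- Claim 2 : a m ≥ b (m+1)
  have claim2 : ∀ i : ℕ, (h : i + 1 < k) → b ⟨i+1, h⟩ ≤ a ⟨i, by omega⟩ := by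
    intro m hm1
    by_contra hcon
    push_neg at hcon
    refine key (n := 2*k+1) (ι := Fin (m+2)) (κ := Fin (k - m) ⊕ Fin k)
      (by simp only [Fintype.card_sum, Fintype.card_fin]; omega) Ac
      (fun i => P *ᵥ evec k ⟨i.val, by have := i.isLt; omega⟩ 1)
      (fun j => match j with
        | Sum.inl j => evec k ⟨m + j.val, by have := j.isLt; omega⟩
            (sg ⟨m + j.val, by have := j.isLt; omega⟩)
        | Sum.inr j => evec k j (-(sg j)))
      (fun i => b ⟨i.val, by have := i.isLt; omega⟩)
      (fun j => match j with
        | Sum.inl j => |a ⟨m + j.val, by have := j.isLt; omega⟩|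
        | Sum.inr j => -|a j|)
      (a ⟨m, by omega⟩) ?_ ?_ (fun _ => 2) (fun _ => 2) ?_ ?_ ?_ ?_ ?_ ?_ ?_ ?_
    · -- hμ
      intro i
      exact lt_of_lt_of_le hcon (hbmono (m+1) i.val (by have := i.isLt; omega) hm1)
    · -- hν
      rintro (j | j)
      · have h1 : |a ⟨m + j.val, by have := j.isLt; omega⟩| ≤ |a ⟨m, by omega⟩| :=
          habs (m + j.val) m (by omega) (by have := j.isLt; omega)
        rw [abs_of_nonneg (hann m hm1)] at h1
        exact h1
      · exact le_trans (neg_nonpos.mpr (abs_nonneg _)) (hann m hm1)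
    · -- hNv
      intro i
      rw [hWdot, evec_dot, if_pos rfl]
      norm_num
    · intro i
      norm_num
    · -- hNw
      rintro (j | j)
      · rw [evec_dot, if_pos rfl, hsg1]
        norm_num
      · rw [evec_dot, if_pos rfl, neg_mul_neg, hsg1]
        norm_num
    · rintro (j | j) <;> norm_num
    · -- hvo
      intro i i' hne
      rw [hWdot, evec_dot, if_neg]
      intro h
      apply hne
      have hval : i.val = i'.val := by
        have := congrArg Fin.val h
        simpa using this
      exact Fin.ext hval
    · -- hwo
      rintro (j | j) (j' | j') hne
      · rw [evec_dot, if_neg]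
        intro h
        apply hne
        have hval := congrArg Fin.val h
        simp only [Fin.val_mk] at hval
        have : j = j' := Fin.ext (by omega)
        rw [this]
      · rw [evec_dot]
        split_ifs with h
        · rw [h]
          rw [show (1 + sg j' * -(sg j') : ℝ) = 0 by rw [mul_neg, hsg1]; ring]
          simp
        · rfl
      · rw [evec_dot]
        split_ifs with h
        · rw [← h]
          rw [show (1 + -(sg j) * sg j : ℝ) = 0 by rw [neg_mul, hsg1]; ring]
          simp
        · rfl
      · rw [evec_dot, if_neg]
        intro h
        exact hne (by rw [show j = j' from h])
    · -- hvf
      intro i i'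
      rw [hWform, hWdot, hScdef, diagL_mulVec_evec b _ 1 (by norm_num),
        dotProduct_smul, smul_eq_mul]
      push_cast
      ring
    · -- hwf
      rintro (j | j) (j' | j')
      · rw [hAcdef, evec_form a Y _ _ _ _ (hsg1 _), hsgabs]
      · rw [hAcdef, evec_form a Y _ _ _ _ (by rw [neg_mul_neg]; exact hsg1 _)]
        rw [show (-(sg j') * a j' : ℝ) = -|a j'| by rw [neg_mul, hsgabs]]
      · rw [hAcdef, evec_form a Y _ _ _ _ (hsg1 _), hsgabs]
      · rw [hAcdef, evec_form a Y _ _ _ _ (by rw [neg_mul_neg]; exact hsg1 _)]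
        rw [show (-(sg j') * a j' : ℝ) = -|a j'| by rw [neg_mul, hsgabs]]
  refine ⟨?_, ?_, ?_⟩
  · intro i h
    exact le_trans (le_abs_self _) (claim1 ⟨i, by omega⟩)
  · intro i h
    exact claim2 i h
  · exact claim1 ⟨k-1, by omega⟩
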